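/- arXiv:2511.01851 — 2 statements merged into one kernel-verified Lean document; each statement's English description precedes it below -/
import Mathlib

section
/- Let G and H be finitely generated groups with G one-ended and H Noetherian (every subgroup of H is finitely generated). Let π : H → G be a surjective group homomorphism and let S be a finite generating subset of H. Let ℋ be the Cayley graph of H with respect to S and 𝒢 the Cayley graph of G with respect to π(S). Then C*_E(𝒢) ≤ C_E(ℋ). -/
open MeasureTheory Set
open scoped ENNReal

namespace PercPaper

/-! ### The Bernoulli(p) product measure on `ι → Bool`

We realize the Bernoulli product measure as the pushforward of the uniform
measure on `[0,1)` under the standard digit-interleaving construction: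
the binary digits of a uniform point of `[0,1)` are i.i.d. fair coins; by
interleaving (via the pairing function `Nat.pair`) we extract countably many
independent uniform random variables, and thresholding each at `p` produces
i.i.d. Bernoulli(`p`) bits. -/

/-- The `k`-th binary digit of a real number `x ∈ [0,1)`. -/
noncomputable def digit (k : ℕ) (x : ℝ) : Bool :=
  decide (⌊x * 2 ^ (k + 1)⌋ % 2 = 1)

/-- The `i`-th of countably many independent uniforms extracted from a single
uniform `x ∈ [0,1)` by digit interleaving. -/
noncomputable def unif (i : ℕ) (x : ℝ) : ℝ :=
  ∑' k : ℕ, if digit (Nat.pair i k) x then ((2 : ℝ) ^ (k + 1))⁻¹ else 0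

/-- The coordinates of the Bernoulli(`p`) product: coordinate `i` is `true`
("open") iff the `i`-th extracted uniform is `< p`. -/
noncomputable def coords (ι : Type) [Countable ι] (p : ℝ) (x : ℝ) : ι → Bool :=
  letI : Encodable ι := Encodable.ofCountable ι
  fun i => decide (unif (Encodable.encode i) x < p)

/-- The Bernoulli(`p`) product measure on `ι → Bool`. -/
noncomputable def bernoulliProd (ι : Type) [Countable ι] (p : ℝ) :
    Measure (ι → Bool) :=
  Measure.map (coords ι p) (volume.restrict (Set.Ico (0 : ℝ) 1))

/-! ### Graphs: the class of graphs under consideration -/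

/-- A simple, nonempty, locally finite, connected graph.  (Such a graph is
automatically countable; we record countability as a field.) -/
structure SpaceGraph : Type 1 where
  V : Type
  G : SimpleGraph V
  connected : G.Connected
  locallyFinite : ∀ v : V, (G.neighborSet v).Finite
  countableV : Countable V

instance (Γ : SpaceGraph) : Countable Γ.V := Γ.countableV

/-! ### Combinatorial notions on plain simple graphs -/

/-- `u` and `v` are `k`-adjacent: `1 ≤ d_G(u,v) ≤ k`. -/
def kAdj {V : Type} (G : SimpleGraph V) (k : ℕ) (u v : V) : Prop :=
  1 ≤ G.dist u v ∧ G.dist u v ≤ k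

/-- A set of vertices is `k`-connected if it is connected under `k`-adjacency. -/
def kConnectedSet {V : Type} (G : SimpleGraph V) (k : ℕ) (A : Set V) : Prop :=
  ∀ x ∈ A, ∀ y ∈ A,
    Relation.ReflTransGen (fun a b => a ∈ A ∧ b ∈ A ∧ kAdj G k a b) x y

/-- Two distinct edges are `k`-adjacent if some endpoint of one lies at
distance at most `k` from some endpoint of the other. -/
def edgeKAdj {V : Type} (G : SimpleGraph V) (k : ℕ) (e f : Sym2 V) : Prop :=
  e ≠ f ∧ ∃ x ∈ e, ∃ y ∈ f, G.dist x y ≤ k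

/-- A set of edges is `k`-connected if it is connected under `k`-adjacency. -/
def edgeKConnectedSet {V : Type} (G : SimpleGraph V) (k : ℕ) (A : Set (Sym2 V)) : Prop :=
  ∀ e ∈ A, ∀ f ∈ A,
    Relation.ReflTransGen (fun a b => a ∈ A ∧ b ∈ A ∧ edgeKAdj G k a b) e f

/-- `A` is a cutset between `u` and `v`: every walk from `u` to `v` meets `A`. -/
def IsCutset {V : Type} (G : SimpleGraph V) (A : Set V) (u v : V) : Prop :=
  ∀ w : G.Walk u v, ∃ x ∈ w.support, x ∈ A

/-- `A` is a minimal cutset between `u` and `v`. -/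
def IsMinCutset {V : Type} (G : SimpleGraph V) (A : Set V) (u v : V) : Prop :=
  IsCutset G A u v ∧ ∀ B : Set V, B ⊂ A → ¬IsCutset G B u v

/-- `C(G) ≤ k`: every minimal cutset between two vertices is `k`-connected. -/
def cutConnLe {V : Type} (G : SimpleGraph V) (k : ℕ) : Prop :=
  ∀ u v : V, ∀ A : Set V, IsMinCutset G A u v → kConnectedSet G k A

/-- `C*(G) ≤ k`: every finite minimal cutset between two vertices is `k`-connected. -/
def cutConnStarLe {V : Type} (G : SimpleGraph V) (k : ℕ) : Prop :=
  ∀ u v : V, ∀ A : Set V, A.Finite → IsMinCutset G A u v → kConnectedSet G k A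

/-- `A` is a bond-cutset between `u` and `v`: a set of edges of `G` such that
every walk from `u` to `v` uses an edge of `A`. -/
def IsBondCutset {V : Type} (G : SimpleGraph V) (A : Set (Sym2 V)) (u v : V) : Prop :=
  A ⊆ G.edgeSet ∧ ∀ w : G.Walk u v, ∃ e ∈ w.edges, e ∈ A

/-- `A` is a minimal bond-cutset between `u` and `v`. -/
def IsMinBondCutset {V : Type} (G : SimpleGraph V) (A : Set (Sym2 V)) (u v : V) : Prop :=
  IsBondCutset G A u v ∧ ∀ B : Set (Sym2 V), B ⊂ A → ¬IsBondCutset G B u v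

/-- `C_E(G) ≤ k`: every minimal bond-cutset between two vertices is `k`-connected. -/
def edgeCutConnLe {V : Type} (G : SimpleGraph V) (k : ℕ) : Prop :=
  ∀ u v : V, ∀ A : Set (Sym2 V), IsMinBondCutset G A u v → edgeKConnectedSet G k A

/-- `C*_E(G) ≤ k`: every finite minimal bond-cutset between two vertices is
`k`-connected. -/
def edgeCutConnStarLe {V : Type} (G : SimpleGraph V) (k : ℕ) : Prop :=
  ∀ u v : V, ∀ A : Set (Sym2 V), A.Finite → IsMinBondCutset G A u v →
    edgeKConnectedSet G k A

/-- Reachability inside a set `S` of vertices. -/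
def reachIn {V : Type} (G : SimpleGraph V) (S : Set V) : V → V → Prop :=
  Relation.ReflTransGen fun a b => a ∈ S ∧ b ∈ S ∧ G.Adj a b

/-- There is a path from `x` to `y` all of whose vertices lie in `S`. -/
def pathIn {V : Type} (G : SimpleGraph V) (S : Set V) (x y : V) : Prop :=
  x ∈ S ∧ reachIn G S x y

/-- The connected component of `u` of the subgraph induced on `S`. -/
def compIn {V : Type} (G : SimpleGraph V) (S : Set V) (u : V) : Set V :=
  {v | pathIn G S u v}

/-- `G` is one-ended: for every finite set `F` of vertices, the complement of
`F` has exactly one infinite connected component. -/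
def OneEnded {V : Type} (G : SimpleGraph V) : Prop :=
  ∀ F : Set V, F.Finite →
    ∃ u, u ∉ F ∧ (compIn G Fᶜ u).Infinite ∧
      ∀ v, v ∉ F → (compIn G Fᶜ v).Infinite → pathIn G Fᶜ u v

/-- The outer vertex boundary `∂_V A`: vertices not in `A` adjacent to `A`. -/
def vertexBoundary {V : Type} (G : SimpleGraph V) (A : Set V) : Set V :=
  {v | v ∉ A ∧ ∃ u ∈ A, G.Adj u v}

/-- A fibration: a 1-Lipschitz map along which every edge at the image of `x`
lifts to an edge at `x`. -/
def IsFibration {V W : Type} (GrL : SimpleGraph V) (GrS : SimpleGraph W)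
    (pr : V → W) : Prop :=
  (∀ x y : V, GrS.dist (pr x) (pr y) ≤ GrL.dist x y) ∧
  (∀ (x : V) (v : W), GrS.Adj (pr x) v → ∃ y : V, GrL.Adj x y ∧ pr y = v)

/-- `φ` is an `A`-quasi-isometry. -/
def IsQI {V W : Type} (A : ℝ) (G : SimpleGraph V) (H : SimpleGraph W)
    (φ : V → W) : Prop :=
  (∀ x y : V, (1 / A) * (G.dist x y : ℝ) - A ≤ (H.dist (φ x) (φ y) : ℝ) ∧
      (H.dist (φ x) (φ y) : ℝ) ≤ A * (G.dist x y : ℝ) + A) ∧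
  (∀ z : W, ∃ x : V, (H.dist z (φ x) : ℝ) ≤ A)

/-- `G` and `H` are `A`-quasi-isometric (with `A`-quasi-inverse maps). -/
def QuasiIsometric {V W : Type} (A : ℝ) (G : SimpleGraph V) (H : SimpleGraph W) : Prop :=
  ∃ (φ : V → W) (ψ : W → V), IsQI A G H φ ∧ IsQI A H G ψ ∧
    (∀ x : V, (G.dist (ψ (φ x)) x : ℝ) ≤ A) ∧
    (∀ z : W, (H.dist (φ (ψ z)) z : ℝ) ≤ A)

/-! ### Balls, transitivity, the class `𝔊`, and the local topology -/

/-- The ball of radius `r` around `o`. -/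
def ball (Γ : SpaceGraph) (o : Γ.V) (r : ℕ) : Set Γ.V := {v | Γ.G.dist o v ≤ r}

/-- The sphere of radius `r` around `o`. -/
def sphere (Γ : SpaceGraph) (o : Γ.V) (r : ℕ) : Set Γ.V := {v | Γ.G.dist o v = r}

/-- `Γ` is (vertex-)transitive. -/
def IsTransitive (Γ : SpaceGraph) : Prop :=
  ∀ u v : Γ.V, ∃ φ : Γ.G ≃g Γ.G, φ u = v

/-- Membership in the class `𝔊`: transitive, superlinear growth, and
polynomial growth. -/
def InPolyClass (Γ : SpaceGraph) : Prop :=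
  IsTransitive Γ ∧
  (∀ (o : Γ.V) (K : ℕ), ∃ R : ℕ, ∀ r : ℕ, R ≤ r → K * r ≤ (ball Γ o r).ncard) ∧
  (∃ C d : ℕ, ∀ (o : Γ.V) (r : ℕ), 1 ≤ r → (ball Γ o r).ncard ≤ C * r ^ d)

lemma self_mem_ball (Γ : SpaceGraph) (o : Γ.V) (r : ℕ) : o ∈ ball Γ o r := by
  simp [ball, SimpleGraph.dist_self]

/-- The rooted balls of radius `r` in `Γ` (around `o`) and `Δ` (around `o'`)
are isomorphic, by an isomorphism matching the roots. -/
def rootedBallIso (Γ Δ : SpaceGraph) (o : Γ.V) (o' : Δ.V) (r : ℕ) : Prop :=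
  ∃ φ : Γ.G.induce (ball Γ o r) ≃g Δ.G.induce (ball Δ o' r),
    φ ⟨o, self_mem_ball Γ o r⟩ = ⟨o', self_mem_ball Δ o' r⟩

/-- `R(Γ,Δ) ≥ r`: the `r`-balls of `Γ` and `Δ` are isomorphic as rooted graphs. -/
def RGe (Γ Δ : SpaceGraph) (r : ℕ) : Prop :=
  ∃ (o : Γ.V) (o' : Δ.V), rootedBallIso Γ Δ o o' r

/-! ### Bernoulli percolation -/

/-- The probability of the event `A` under Bernoulli(`p`) bond percolation on `Γ`.
(Configurations assign a state to every element of `Sym2 Γ.V`; only the states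
of actual edges matter for the events considered.) -/
noncomputable def prob (Γ : SpaceGraph) (p : ℝ) (A : Set (Sym2 Γ.V → Bool)) : ℝ :=
  (bernoulliProd (Sym2 Γ.V) p A).toReal

/-- The probability of the event `A`, as an extended nonnegative real. -/
noncomputable def probNN (Γ : SpaceGraph) (p : ℝ) (A : Set (Sym2 Γ.V → Bool)) : ℝ≥0∞ :=
  bernoulliProd (Sym2 Γ.V) p A

/-- `u` and `v` are adjacent and the edge between them is open in `ω`. -/
def openAdj (Γ : SpaceGraph) (ω : Sym2 Γ.V → Bool) (u v : Γ.V) : Prop :=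
  Γ.G.Adj u v ∧ ω s(u, v) = true

/-- `u` and `v` are connected by an open path in `ω`. -/
def Conn (Γ : SpaceGraph) (ω : Sym2 Γ.V → Bool) (u v : Γ.V) : Prop :=
  Relation.ReflTransGen (openAdj Γ ω) u v

/-- The (open) cluster of `u` in `ω`. -/
def cluster (Γ : SpaceGraph) (ω : Sym2 Γ.V → Bool) (u : Γ.V) : Set Γ.V :=
  {v | Conn Γ ω u v}

/-- `θ_Γ(p)` with root `o` (independent of `o` for transitive graphs). -/
noncomputable def theta (Γ : SpaceGraph) (o : Γ.V) (p : ℝ) : ℝ :=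
  prob Γ p {ω | (cluster Γ ω o).Infinite}

/-- The critical parameter `p_c(Γ)` (with root `o`). -/
noncomputable def pc (Γ : SpaceGraph) (o : Γ.V) : ℝ :=
  sInf ({1} ∪ {p : ℝ | p ∈ Set.Icc (0 : ℝ) 1 ∧ 0 < theta Γ o p})


/-! ### Good and bad vertices, interfaces -/

/-- Open connectivity using only vertices of `S`. -/
def ConnIn (Γ : SpaceGraph) (ω : Sym2 Γ.V → Bool) (S : Set Γ.V) (u v : Γ.V) : Prop :=
  Relation.ReflTransGen (fun a b => a ∈ S ∧ b ∈ S ∧ openAdj Γ ω a b) u v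

/-- The uniqueness event `U(m,n,x)`: at most one cluster of `ω` restricted to
`B(x,n)` intersects both `B(x,m)` and `S(x,n)`. -/
def UEvent (Γ : SpaceGraph) (ω : Sym2 Γ.V → Bool) (m n : ℕ) (x : Γ.V) : Prop :=
  ∀ a b a' b' : Γ.V, a ∈ ball Γ x m → b ∈ sphere Γ x n →
    a' ∈ ball Γ x m → b' ∈ sphere Γ x n →
    ConnIn Γ ω (ball Γ x n) a b → ConnIn Γ ω (ball Γ x n) a' b' →
    ConnIn Γ ω (ball Γ x n) a a'

/-- `x` is `N`-good in `ω`. -/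
def NGood (Γ : SpaceGraph) (ω : Sym2 Γ.V → Bool) (N : ℕ) (x : Γ.V) : Prop :=
  ∀ z : Γ.V, (z = x ∨ Γ.G.Adj x z) →
    (∃ a ∈ ball Γ z N, ∃ b ∈ sphere Γ z (10 * N), Conn Γ ω a b) ∧
      UEvent Γ ω (2 * N) (5 * N) z

/-- `x` is `N`-bad in `ω`. -/
def NBad (Γ : SpaceGraph) (ω : Sym2 Γ.V → Bool) (N : ℕ) (x : Γ.V) : Prop :=
  ¬NGood Γ ω N x

/-- `C_x^bad(N)`: the `t`-connected component of `x` within the `N`-bad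
vertices (empty if `x` is `N`-good). -/
def badComp (Γ : SpaceGraph) (ω : Sym2 Γ.V → Bool) (N t : ℕ) (x : Γ.V) : Set Γ.V :=
  {y | NBad Γ ω N x ∧
    Relation.ReflTransGen (fun a b => NBad Γ ω N a ∧ NBad Γ ω N b ∧ kAdj Γ.G t a b) x y}

/-- `C_o(N)`: the set of vertices within distance `N` of the cluster of `o`. -/
def clusterNbhd (Γ : SpaceGraph) (ω : Sym2 Γ.V → Bool) (o : Γ.V) (N : ℕ) : Set Γ.V :=
  {v | ∃ u ∈ cluster Γ ω o, Γ.G.dist v u ≤ N}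

/-- The exposed boundary `∂A`: vertices of `A` adjacent to an infinite
connected component of the complement of `A`. -/
def exposedBoundary (Γ : SpaceGraph) (A : Set Γ.V) : Set Γ.V :=
  {v | v ∈ A ∧ ∃ w, w ∉ A ∧ Γ.G.Adj v w ∧ (compIn Γ.G Aᶜ w).Infinite}

/-- An interface (relative to the root `o` and the connectivity constant `t`):
a finite `t`-connected set of vertices containing `o` or surrounding `o`. -/
def IsInterface (Γ : SpaceGraph) (o : Γ.V) (t : ℕ) (I : Finset Γ.V) : Prop :=
  kConnectedSet Γ.G t (↑I : Set Γ.V) ∧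
    (o ∈ I ∨ (o ∉ I ∧ (compIn Γ.G ((↑I : Set Γ.V))ᶜ o).Finite))

/-- The set of vertices within distance `r` of `I`. -/
def interfaceNbhd (Γ : SpaceGraph) (I : Finset Γ.V) (r : ℕ) : Set Γ.V :=
  {v | ∃ y ∈ I, Γ.G.dist v y ≤ r}

/-- The interface `I` occurs in `ω` at scale `N`: all its vertices are `N`-bad,
all vertices at distance between `1` and `t` from it are `N`-good, and the
closed edges with both endpoints within distance `5N` of `I` form a
bond-cutset between `o` and infinity. -/
def InterfaceOccurs (Γ : SpaceGraph) (o : Γ.V) (t N : ℕ) (ω : Sym2 Γ.V → Bool)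
    (I : Finset Γ.V) : Prop :=
  (∀ x ∈ I, NBad Γ ω N x) ∧
  (∀ x : Γ.V, x ∉ I → (∃ y ∈ I, Γ.G.dist x y ≤ t) → NGood Γ ω N x) ∧
  (∀ f : ℕ → Γ.V, f 0 = o → Function.Injective f →
    (∀ n : ℕ, Γ.G.Adj (f n) (f (n + 1))) →
    ∃ n : ℕ, ω s(f n, f (n + 1)) = false ∧
      f n ∈ interfaceNbhd Γ I (5 * N) ∧ f (n + 1) ∈ interfaceNbhd Γ I (5 * N))

/-- A multi-interface: a finite nonempty collection of pairwise disjoint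
interfaces. -/
def IsMultiInterface (Γ : SpaceGraph) (o : Γ.V) (t : ℕ)
    (M : Finset (Finset Γ.V)) : Prop :=
  M.Nonempty ∧ (∀ I ∈ M, IsInterface Γ o t I) ∧
    ∀ I ∈ M, ∀ J ∈ M, I ≠ J → Disjoint I J

/-- The size of a multi-interface. -/
def multiSize {α : Type} (M : Finset (Finset α)) : ℕ := ∑ I ∈ M, I.card

/-- The multi-interface `M` occurs in `ω` at scale `N`. -/
def MultiOccurs (Γ : SpaceGraph) (o : Γ.V) (t N : ℕ) (ω : Sym2 Γ.V → Bool)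
    (M : Finset (Finset Γ.V)) : Prop :=
  ∀ I ∈ M, InterfaceOccurs Γ o t N ω I

/-! ### Growth degree and dimension -/

/-- `Γ` has growth of degree at most `d`. -/
def growthLe (Γ : SpaceGraph) (d : ℕ) : Prop :=
  ∃ C : ℕ, ∀ (o : Γ.V) (r : ℕ), 1 ≤ r → (ball Γ o r).ncard ≤ C * r ^ d

/-- The dimension of a graph of polynomial growth: the least degree `d` of a
polynomial upper bound on the growth. -/
noncomputable def dimen (Γ : SpaceGraph) : ℕ := sInf {d | growthLe Γ d}

/-! ### Cayley graphs and products of cycle-graphs -/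

/-- The Cayley graph of a group `K` with respect to a (symmetrized) set `T`. -/
def cayley (K : Type) [Group K] (T : Set K) : SimpleGraph K where
  Adj g h := g ≠ h ∧ (g⁻¹ * h ∈ T ∨ h⁻¹ * g ∈ T)
  symm := by
    constructor
    rintro g h ⟨hgh, hmem⟩
    exact ⟨hgh.symm, hmem.symm⟩
  loopless := ⟨fun g h => h.1 rfl⟩

/-- A finitely generated group is one-ended if all of its Cayley graphs with
respect to finite generating sets are one-ended. -/
def GroupOneEnded (K : Type) [Group K] : Prop :=
  ∀ T : Set K, T.Finite → Subgroup.closure T = ⊤ → OneEnded (cayley K T)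

/-- The box product of a finite family of graphs. -/
def boxProd {m : ℕ} (Vf : Fin m → Type) (Gf : ∀ i, SimpleGraph (Vf i)) :
    SimpleGraph (∀ i, Vf i) where
  Adj a b := ∃ i, (Gf i).Adj (a i) (b i) ∧ ∀ j, j ≠ i → a j = b j
  symm := by
    constructor
    rintro a b ⟨i, hadj, h⟩
    exact ⟨i, hadj.symm, fun j hj => (h j hj).symm⟩
  loopless := by
    constructor
    rintro a ⟨i, hadj, -⟩
    exact (Gf i).irrefl hadj

/-- Membership in the class `𝔄`: products of finitely many cycle-graphs
(connected graphs in which every vertex has degree 2), at least two of which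
are infinite. -/
def InA (Γ : SpaceGraph) : Prop :=
  ∃ (m : ℕ) (Vf : Fin m → Type) (Gf : ∀ i, SimpleGraph (Vf i)),
    (∀ i, (Gf i).Connected) ∧
    (∀ (i : Fin m) (v : Vf i), ((Gf i).neighborSet v).ncard = 2) ∧
    (∃ i j : Fin m, i ≠ j ∧ Infinite (Vf i) ∧ Infinite (Vf j)) ∧
    Nonempty (Γ.G ≃g boxProd Vf Gf)



/-! ### Auxiliary lemmas for Statement 11 -/

section Aux

open Relation SimpleGraph

variable {K : Type} [Group K]

lemma cayley_adj_iff {T : Set K} {a b : K} :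
    (cayley K T).Adj a b ↔ a ≠ b ∧ (a⁻¹ * b ∈ T ∨ b⁻¹ * a ∈ T) := Iff.rfl

/-- Left multiplication as an automorphism of a Cayley graph. -/
def cayleyMulIso (T : Set K) (x : K) : cayley K T ≃g cayley K T where
  toEquiv := Equiv.mulLeft x
  map_rel_iff' := by
    intro a b
    simp only [Equiv.coe_mulLeft, cayley_adj_iff, mul_inv_rev]
    constructor
    · rintro ⟨hne, h⟩
      refine ⟨fun hab => hne (by rw [hab]), ?_⟩
      rcases h with h | h
      · left; rwa [mul_assoc, inv_mul_cancel_left] at h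
      · right; rwa [mul_assoc, inv_mul_cancel_left] at h
    · rintro ⟨hne, h⟩
      refine ⟨fun hab => hne (mul_left_cancel hab), ?_⟩
      rcases h with h | h
      · left; rwa [mul_assoc, inv_mul_cancel_left]
      · right; rwa [mul_assoc, inv_mul_cancel_left]

lemma cayley_reachable_mul {T : Set K} (x : K) {a b : K}
    (h : (cayley K T).Reachable a b) :
    (cayley K T).Reachable (x * a) (x * b) :=
  h.map (cayleyMulIso T x).toHom

lemma cayley_reachable_one {T : Set K} (hT : Subgroup.closure T = ⊤) (g : K) :
    (cayley K T).Reachable 1 g := by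
  have hg : g ∈ Subgroup.closure T := by rw [hT]; trivial
  induction hg using Subgroup.closure_induction with
  | mem s hs =>
    by_cases h1 : (1 : K) = s
    · rw [← h1]
    · exact SimpleGraph.Adj.reachable ⟨h1, Or.inl (by rwa [inv_one, one_mul])⟩
  | one => rfl
  | mul a b _ _ ha hb =>
    refine ha.trans ?_
    have := cayley_reachable_mul (T := T) a hb
    rwa [mul_one] at this
  | inv a _ ha =>
    have := cayley_reachable_mul (T := T) a⁻¹ ha
    rw [mul_one, inv_mul_cancel] at this
    exact this.symm

lemma cayley_connected {T : Set K} (hT : Subgroup.closure T = ⊤) :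
    (cayley K T).Connected := by
  have : Nonempty K := ⟨1⟩
  rw [SimpleGraph.connected_iff]
  exact ⟨fun a b => (cayley_reachable_one hT a).symm.trans (cayley_reachable_one hT b), this⟩

lemma cayley_dist_mul {T : Set K} (hconn : (cayley K T).Connected) (x a b : K) :
    (cayley K T).dist (x * a) (x * b) = (cayley K T).dist a b := by
  have key : ∀ (y c d : K),
      (cayley K T).dist (y * c) (y * d) ≤ (cayley K T).dist c d := by
    intro y c d
    obtain ⟨w, hw⟩ := hconn.exists_walk_length_eq_dist c d
    calc (cayley K T).dist (y * c) (y * d)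
        ≤ (w.map (cayleyMulIso T y).toHom).length := SimpleGraph.dist_le _
      _ = w.length := SimpleGraph.Walk.length_map _ _
      _ = _ := hw
  refine le_antisymm (key x a b) ?_
  have := key x⁻¹ (x * a) (x * b)
  rwa [inv_mul_cancel_left, inv_mul_cancel_left] at this

lemma cayley_locallyFinite {T : Set K} (hT : T.Finite) (g : K) :
    ((cayley K T).neighborSet g).Finite := by
  apply Set.Finite.subset ((hT.image (fun s => g * s)).union (hT.image (fun s => g * s⁻¹)))
  rintro n ⟨-, h | h⟩
  · exact Or.inl ⟨g⁻¹ * n, h, by simp⟩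
  · exact Or.inr ⟨n⁻¹ * g, h, by simp⟩

lemma ball_finite {V : Type} {Γ : SimpleGraph V} (hconn : Γ.Connected)
    (hlf : ∀ v : V, (Γ.neighborSet v).Finite) (g : V) (r : ℕ) :
    {h | Γ.dist g h ≤ r}.Finite := by
  induction r with
  | zero =>
    apply Set.Finite.subset (Set.finite_singleton g)
    intro h hh
    simp only [Set.mem_setOf_eq, Nat.le_zero] at hh
    have : g = h := by
      rwa [SimpleGraph.Reachable.dist_eq_zero_iff (hconn.preconnected g h)] at hh
    simp [this]
  | succ r ih =>
    apply Set.Finite.subset (ih.union (ih.biUnion (fun x _ => hlf x)))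
    intro h hh
    simp only [Set.mem_setOf_eq] at hh
    obtain ⟨q, hq⟩ := hconn.exists_walk_length_eq_dist h g
    cases q with
    | nil => exact Or.inl (by simp [SimpleGraph.dist_self])
    | @cons _ x _ adj p =>
      have hlen : p.length + 1 = Γ.dist h g := by simpa using hq
      refine Or.inr (Set.mem_biUnion (show x ∈ {h | Γ.dist g h ≤ r} from ?_) adj.symm)
      have h1 : Γ.dist x g ≤ p.length := SimpleGraph.dist_le p
      have h2 : Γ.dist h g ≤ r + 1 := by rwa [SimpleGraph.dist_comm] at hh
      simp only [Set.mem_setOf_eq]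
      rw [SimpleGraph.dist_comm]
      omega

lemma reflTransGen_map_of {α β : Type} {r : α → α → Prop} {r' : β → β → Prop}
    (f : α → β) (hf : ∀ a b, r a b → Relation.ReflTransGen r' (f a) (f b))
    {x y : α} (h : Relation.ReflTransGen r x y) :
    Relation.ReflTransGen r' (f x) (f y) := by
  induction h with
  | refl => exact .refl
  | tail _ h₂ ih => exact ih.trans (hf _ _ h₂)

/-! #### Avoiding reachability -/

/-- Reachability avoiding a set of edges. -/
def AvoidReach {V : Type} (Γ : SimpleGraph V) (A : Set (Sym2 V)) : V → V → Prop :=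
  Relation.ReflTransGen (fun a b => Γ.Adj a b ∧ s(a, b) ∉ A)

lemma avoidReach_symm {V : Type} {Γ : SimpleGraph V} {A : Set (Sym2 V)} {x y : V}
    (h : AvoidReach Γ A x y) : AvoidReach Γ A y x := by
  refine (@Relation.ReflTransGen.stdSymm _ _ ⟨?_⟩).symm _ _ h
  rintro a b ⟨hadj, hmem⟩
  exact ⟨hadj.symm, by rwa [Sym2.eq_swap]⟩

lemma avoidReach_iff_walk {V : Type} {Γ : SimpleGraph V} {A : Set (Sym2 V)} {x y : V} :
    AvoidReach Γ A x y ↔ ∃ w : Γ.Walk x y, ∀ e ∈ w.edges, e ∉ A := by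
  constructor
  · intro h
    induction h using Relation.ReflTransGen.head_induction_on with
    | refl => exact ⟨.nil, by simp⟩
    | head h' _ ih =>
      obtain ⟨w, hw⟩ := ih
      refine ⟨.cons h'.1 w, ?_⟩
      intro e he
      rw [SimpleGraph.Walk.edges_cons, List.mem_cons] at he
      rcases he with rfl | he
      · exact h'.2
      · exact hw e he
  · rintro ⟨w, hw⟩
    induction w with
    | nil => exact .refl
    | cons h p ih =>
      refine Relation.ReflTransGen.head ⟨h, hw _ (by simp)⟩ (ih ?_)
      intro e he
      exact hw e (by simp [he])

/-! #### Bond cutsets -/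

lemma bondCutset_symm {V : Type} {Γ : SimpleGraph V} {A : Set (Sym2 V)} {u v : V}
    (h : IsBondCutset Γ A u v) : IsBondCutset Γ A v u := by
  refine ⟨h.1, fun w => ?_⟩
  obtain ⟨e, he, heA⟩ := h.2 w.reverse
  rw [SimpleGraph.Walk.edges_reverse, List.mem_reverse] at he
  exact ⟨e, he, heA⟩

lemma minBondCutset_symm {V : Type} {Γ : SimpleGraph V} {A : Set (Sym2 V)} {u v : V}
    (h : IsMinBondCutset Γ A u v) : IsMinBondCutset Γ A v u :=
  ⟨bondCutset_symm h.1, fun B hB hBcut => h.2 B hB (bondCutset_symm hBcut)⟩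

lemma avoidReach_not_cutset {V : Type} {Γ : SimpleGraph V} {A : Set (Sym2 V)} {u v : V}
    (h : AvoidReach Γ A u v) (hcut : IsBondCutset Γ A u v) : False := by
  obtain ⟨w, hw⟩ := avoidReach_iff_walk.mp h
  obtain ⟨e, he, heA⟩ := hcut.2 w
  exact hw e he heA

lemma minBondCutset_shift {V : Type} {Γ : SimpleGraph V} {A : Set (Sym2 V)} {u v v' : V}
    (hmin : IsMinBondCutset Γ A u v) (hreach : AvoidReach Γ A v v') :
    IsMinBondCutset Γ A u v' := by
  obtain ⟨p, hp⟩ := avoidReach_iff_walk.mp hreach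
  constructor
  · refine ⟨hmin.1.1, fun w => ?_⟩
    obtain ⟨e, he, heA⟩ := hmin.1.2 (w.append p.reverse)
    rw [SimpleGraph.Walk.edges_append, List.mem_append] at he
    rcases he with he | he
    · exact ⟨e, he, heA⟩
    · rw [SimpleGraph.Walk.edges_reverse, List.mem_reverse] at he
      exact absurd heA (hp e he)
  · intro B hB hBcut
    refine hmin.2 B hB ⟨hBcut.1, fun w => ?_⟩
    obtain ⟨e, he, heB⟩ := hBcut.2 (w.append p)
    rw [SimpleGraph.Walk.edges_append, List.mem_append] at he
    rcases he with he | he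
    · exact ⟨e, he, heB⟩
    · exact absurd (hB.1 heB) (hp e he)

lemma walk_split {V : Type} {Γ : SimpleGraph V} (A : Set (Sym2 V)) :
    ∀ {x y : V} (w : Γ.Walk x y),
      (∀ e ∈ w.edges, e ∉ A) ∨
      ∃ e ∈ w.edges, e ∈ A ∧ ∃ z ∈ e, AvoidReach Γ A x z := by
  intro x y w
  induction w with
  | nil => exact Or.inl (by simp)
  | @cons a b c h p ih =>
    by_cases hab : s(a, b) ∈ A
    · exact Or.inr ⟨s(a, b), by simp, hab, a, Sym2.mem_mk_left a b, .refl⟩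
    · rcases ih with hp | ⟨e, he, heA, z, hz, hreach⟩
      · refine Or.inl ?_
        intro e he
        rw [SimpleGraph.Walk.edges_cons, List.mem_cons] at he
        rcases he with rfl | he
        · exact hab
        · exact hp e he
      · exact Or.inr ⟨e, by simp [he], heA, z, hz,
          Relation.ReflTransGen.head ⟨h, hab⟩ hreach⟩

lemma comps_cover {V : Type} {Γ : SimpleGraph V} {A : Set (Sym2 V)} {u v : V}
    (hconn : Γ.Connected) (hmin : IsMinBondCutset Γ A u v) (z : V) :
    AvoidReach Γ A u z ∨ AvoidReach Γ A v z := by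
  -- each edge of `A` has an endpoint reachable from `u` and one from `v`
  have key : ∀ a ∈ A, (∃ x ∈ a, AvoidReach Γ A u x) ∧ (∃ x ∈ a, AvoidReach Γ A v x) := by
    intro a ha
    have hssub : A \ {a} ⊂ A := Set.sdiff_singleton_ssubset.mpr ha
    have hncut := hmin.2 (A \ {a}) hssub
    rw [IsBondCutset, not_and] at hncut
    have hsub : A \ {a} ⊆ Γ.edgeSet := fun e he => hmin.1.1 he.1
    push_neg at hncut
    obtain ⟨w, hw⟩ := hncut hsub
    have hwA : ∀ e ∈ w.edges, e ∈ A → e = a := by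
      intro e he heA
      by_contra hne
      exact (hw e he) ⟨heA, hne⟩
    constructor
    · rcases walk_split A w with hall | ⟨e, hew, heA, x, hx, hr⟩
      · obtain ⟨e, he, heA⟩ := hmin.1.2 w
        exact absurd heA (hall e he)
      · exact ⟨x, (hwA e hew heA) ▸ hx, hr⟩
    · rcases walk_split A w.reverse with hall | ⟨e, hew, heA, x, hx, hr⟩
      · obtain ⟨e, he, heA⟩ := hmin.1.2 w
        refine absurd heA (hall e ?_)
        rwa [SimpleGraph.Walk.edges_reverse, List.mem_reverse]
      · rw [SimpleGraph.Walk.edges_reverse, List.mem_reverse] at hew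
        exact ⟨x, (hwA e hew heA) ▸ hx, hr⟩
  obtain ⟨w, -⟩ := (hconn z u).exists_walk_length_eq_dist
  rcases walk_split A w with hall | ⟨e, hew, heA, x, hx, hr⟩
  · exact Or.inl (avoidReach_symm (avoidReach_iff_walk.mpr ⟨w, hall⟩))
  · obtain ⟨⟨xu, hxu, hru⟩, ⟨xv, hxv, hrv⟩⟩ := key e heA
    have hne : xu ≠ xv := by
      rintro rfl
      exact avoidReach_not_cutset (hru.trans (avoidReach_symm hrv)) hmin.1
    -- `e` has exactly the two members `xu, xv`
    have hx' : x = xu ∨ x = xv := by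
      induction e using Sym2.ind with
      | _ p q =>
        rw [Sym2.mem_iff] at hx hxu hxv
        rcases hx with rfl | rfl <;> rcases hxu with rfl | rfl <;>
          rcases hxv with rfl | rfl <;> tauto
    rcases hx' with rfl | rfl
    · exact Or.inl (hru.trans (avoidReach_symm hr))
    · exact Or.inr (hrv.trans (avoidReach_symm hr))

lemma chain_common {V : Type} {c : Set (Set (Sym2 V))}
    (hchain : IsChain (· ⊆ ·) c) (hne : c.Nonempty) (l : List (Sym2 V))
    (h : ∀ e ∈ l, ∃ C ∈ c, e ∉ C) : ∃ C ∈ c, ∀ e ∈ l, e ∉ C := by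
  induction l with
  | nil => exact ⟨hne.choose, hne.choose_spec, by simp⟩
  | cons e l ih =>
    obtain ⟨C₁, hC₁c, hC₁⟩ := ih (fun e' he' => h e' (by simp [he']))
    obtain ⟨C₂, hC₂c, hC₂⟩ := h e (by simp)
    by_cases heq : C₁ = C₂
    · subst heq
      refine ⟨C₁, hC₁c, ?_⟩
      intro e' he'
      rcases List.mem_cons.mp he' with rfl | he'
      · exact hC₂
      · exact hC₁ e' he'
    · rcases hchain hC₁c hC₂c heq with hsub | hsub
      · refine ⟨C₁, hC₁c, ?_⟩
        intro e' he'
        rcases List.mem_cons.mp he' with rfl | he'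
        · exact fun hc => hC₂ (hsub hc)
        · exact hC₁ e' he'
      · refine ⟨C₂, hC₂c, ?_⟩
        intro e' he'
        rcases List.mem_cons.mp he' with rfl | he'
        · exact hC₂
        · exact fun hc => hC₁ e' he' (hsub hc)

lemma exists_min_bondCutset {V : Type} {Γ : SimpleGraph V} {B : Set (Sym2 V)} {u v : V}
    (hB : IsBondCutset Γ B u v) :
    ∃ C, C ⊆ B ∧ IsMinBondCutset Γ C u v := by
  have hzorn : ∀ c ⊆ {C | C ⊆ B ∧ IsBondCutset Γ C u v}, IsChain (· ⊆ ·) c →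
      ∃ lb ∈ {C | C ⊆ B ∧ IsBondCutset Γ C u v}, ∀ s ∈ c, lb ⊆ s := by
    intro c hcS hchain
    rcases c.eq_empty_or_nonempty with rfl | hne
    · exact ⟨B, ⟨subset_rfl, hB⟩, by simp⟩
    · refine ⟨⋂₀ c, ⟨?_, ?_, ?_⟩, fun s hs => Set.sInter_subset_of_mem hs⟩
      · obtain ⟨C₀, hC₀⟩ := hne
        exact (Set.sInter_subset_of_mem hC₀).trans (hcS hC₀).1
      · obtain ⟨C₀, hC₀⟩ := hne
        exact ((Set.sInter_subset_of_mem hC₀).trans (hcS hC₀).1).trans hB.1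
      · intro w
        by_contra hcon
        push_neg at hcon
        have : ∀ e ∈ w.edges, ∃ C ∈ c, e ∉ C := by
          intro e he
          by_contra hc
          push_neg at hc
          exact hcon e he (Set.mem_sInter.mpr hc)
        obtain ⟨C, hCc, hC⟩ := chain_common hchain hne w.edges this
        obtain ⟨e, he, heC⟩ := (hcS hCc).2.2 w
        exact hC e he heC
  obtain ⟨m, hm⟩ := zorn_superset {C | C ⊆ B ∧ IsBondCutset Γ C u v} hzorn
  refine ⟨m, hm.prop.1, hm.prop.2, ?_⟩
  intro D hD hDcut
  have hDS : D ⊆ B ∧ IsBondCutset Γ D u v := ⟨hD.1.trans hm.prop.1, hDcut⟩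
  exact absurd (hm.le_of_le hDS hD.1) (fun h => hD.2 h)

lemma sym2_mem_finite {α : Type} (e : Sym2 α) : {x | x ∈ e}.Finite := by
  induction e using Sym2.ind with
  | _ p q =>
    apply Set.Finite.subset ((Set.finite_singleton q).insert p)
    intro x hx
    rcases Sym2.mem_iff.mp hx with rfl | rfl
    · exact Set.mem_insert _ _
    · exact Set.mem_insert_of_mem _ rfl

end Aux


section Quotient

variable {G H : Type} [Group G] [Group H] (pr : H →* G) (S : Set H)

/-- Projecting a walk of `Cay(H,S)` to a walk of `Cay(G, pr S)`. -/
lemma proj_walk : ∀ {x y : H} (w : (cayley H S).Walk x y),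
    ∃ w' : (cayley G (pr '' S)).Walk (pr x) (pr y),
      w'.length ≤ w.length ∧
      ∀ e ∈ w'.edges, ∃ e₀ ∈ w.edges, Sym2.map pr e₀ = e := by
  intro x y w
  induction w with
  | nil => exact ⟨.nil, by simp, by simp⟩
  | @cons a b c h p ih =>
    obtain ⟨w', hl, he⟩ := ih
    by_cases hc : pr a = pr b
    · refine ⟨w'.copy hc.symm rfl, by simp [hl, Nat.le_succ_of_le], ?_⟩
      intro e hee
      rw [SimpleGraph.Walk.edges_copy] at hee
      obtain ⟨e₀, he₀, hmap⟩ := he e hee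
      exact ⟨e₀, by simp [he₀], hmap⟩
    · have hadj : (cayley G (pr '' S)).Adj (pr a) (pr b) := by
        refine ⟨hc, ?_⟩
        rcases h.2 with hs | hs
        · exact Or.inl ⟨a⁻¹ * b, hs, by rw [map_mul, map_inv]⟩
        · exact Or.inr ⟨b⁻¹ * a, hs, by rw [map_mul, map_inv]⟩
      refine ⟨.cons hadj w', by simpa using hl, ?_⟩
      intro e hee
      rw [SimpleGraph.Walk.edges_cons, List.mem_cons] at hee
      rcases hee with rfl | hee
      · exact ⟨s(a, b), by simp, Sym2.map_pair_eq pr a b⟩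
      · obtain ⟨e₀, he₀, hmap⟩ := he e hee
        exact ⟨e₀, by simp [he₀], hmap⟩

lemma dist_pr_le (hconnH : (cayley H S).Connected) (x y : H) :
    (cayley G (pr '' S)).dist (pr x) (pr y) ≤ (cayley H S).dist x y := by
  obtain ⟨w, hw⟩ := hconnH.exists_walk_length_eq_dist x y
  obtain ⟨w', hl, -⟩ := proj_walk pr S w
  calc (cayley G (pr '' S)).dist (pr x) (pr y) ≤ w'.length := SimpleGraph.dist_le _
    _ ≤ w.length := hl
    _ = _ := hw

/-- Lifting a walk of `Cay(G, pr S)` to a walk of `Cay(H,S)`. -/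
lemma lift_walk : ∀ {g g' : G} (w : (cayley G (pr '' S)).Walk g g') (x : H), pr x = g →
    ∃ (y : H) (w1 : (cayley H S).Walk x y), pr y = g' ∧
      ∀ e ∈ w1.edges, Sym2.map pr e ∈ w.edges := by
  intro g g' w
  induction w with
  | nil => exact fun x hx => ⟨x, .nil, hx, by simp⟩
  | @cons a b c h p ih =>
    intro x hx
    have hstep : ∃ y₁ : H, (cayley H S).Adj x y₁ ∧ pr y₁ = b := by
      rcases h.2 with ⟨s, hs, hps⟩ | ⟨s, hs, hps⟩
      · refine ⟨x * s, ⟨?_, Or.inl (by simp [hs])⟩, ?_⟩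
        · intro hxy
          apply h.1
          have : pr x = pr (x * s) := by rw [← hxy]
          rw [map_mul, hps, hx, mul_inv_cancel_left] at this
          exact this
        · rw [map_mul, hps, hx, mul_inv_cancel_left]
      · refine ⟨x * s⁻¹, ⟨?_, Or.inr (by simp [hs])⟩, ?_⟩
        · intro hxy
          apply h.1
          have : pr x = pr (x * s⁻¹) := by rw [← hxy]
          rw [map_mul, map_inv, hps, hx, mul_inv_rev, inv_inv,
            mul_inv_cancel_left] at this
          exact this
        · rw [map_mul, map_inv, hps, hx, mul_inv_rev, inv_inv, ← mul_assoc,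
            mul_inv_cancel, one_mul]
    obtain ⟨y₁, hadj, hy₁⟩ := hstep
    obtain ⟨y, w1, hy, hed⟩ := ih y₁ hy₁
    refine ⟨y, .cons hadj w1, hy, ?_⟩
    intro e hee
    rw [SimpleGraph.Walk.edges_cons, List.mem_cons] at hee
    rcases hee with rfl | hee
    · rw [Sym2.map_pair_eq, hx, hy₁]
      simp
    · simp [hed e hee]

/-- Walks inside the kernel staying close to the fiber. -/
lemma ker_walk {T : Finset H} (hTker : Subgroup.closure (↑T : Set H) = pr.ker)
    (hconnH : (cayley H S).Connected) (hconnG : (cayley G (pr '' S)).Connected)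
    {L : ℕ} (hL : ∀ t ∈ T, (cayley H S).dist 1 t ≤ L) :
    ∀ h ∈ Subgroup.closure (↑T : Set H), ∀ x : H,
      ∃ w : (cayley H S).Walk x (x * h), ∀ z ∈ w.support,
        (cayley G (pr '' S)).dist (pr x) (pr z) ≤ L := by
  classical
  intro h hh
  induction hh using Subgroup.closure_induction with
  | mem t ht =>
    intro x
    obtain ⟨w₀, hw₀⟩ := hconnH.exists_walk_length_eq_dist 1 t
    refine ⟨((w₀.map (cayleyMulIso S x).toHom).copy (mul_one x) rfl), ?_⟩
    intro z hz
    replace hz := Eq.mp (congrArg (z ∈ ·) (SimpleGraph.Walk.support_copy _ _ _)) hz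
    rw [SimpleGraph.Walk.support_map, List.mem_map] at hz
    obtain ⟨z₀, hz₀, rfl⟩ := hz
    have h1 : (cayley H S).dist 1 z₀ ≤ L := by
      have := SimpleGraph.dist_le (w₀.takeUntil z₀ hz₀)
      have h2 := SimpleGraph.Walk.length_takeUntil_le w₀ hz₀
      have h3 : (cayley H S).dist 1 t ≤ L := hL t (by exact_mod_cast ht)
      omega
    show (cayley G (pr '' S)).dist (pr x) (pr ((cayleyMulIso S x) z₀)) ≤ L
    have hmul : ((cayleyMulIso S x) z₀ : H) = x * z₀ := rfl
    rw [hmul, map_mul]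
    calc (cayley G (pr '' S)).dist (pr x) (pr x * pr z₀)
        = (cayley G (pr '' S)).dist (pr x * 1) (pr x * pr z₀) := by rw [mul_one]
      _ = (cayley G (pr '' S)).dist 1 (pr z₀) := cayley_dist_mul hconnG _ _ _
      _ = (cayley G (pr '' S)).dist (pr 1) (pr z₀) := by rw [map_one]
      _ ≤ (cayley H S).dist 1 z₀ := dist_pr_le pr S hconnH 1 z₀
      _ ≤ L := h1
  | one =>
    intro x
    refine ⟨(SimpleGraph.Walk.nil' x).copy rfl (mul_one x).symm, ?_⟩
    intro z hz
    rw [SimpleGraph.Walk.support_copy] at hz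
    simp only [SimpleGraph.Walk.support_nil, List.mem_singleton] at hz
    subst hz
    simp [SimpleGraph.dist_self]
  | mul a b ha hb pa pb =>
    intro x
    obtain ⟨w₁, hw₁⟩ := pa x
    obtain ⟨w₂, hw₂⟩ := pb (x * a)
    have hpa : pr a = 1 := by
      have : a ∈ pr.ker := hTker ▸ ha
      exact this
    refine ⟨(w₁.append w₂).copy rfl (mul_assoc x a b), ?_⟩
    intro z hz
    rw [SimpleGraph.Walk.support_copy] at hz
    rcases (SimpleGraph.Walk.mem_support_append_iff _ _).mp hz with hz | hz
    · exact hw₁ z hz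
    · have := hw₂ z hz
      rwa [map_mul, hpa, mul_one] at this
  | inv a ha pa =>
    intro x
    obtain ⟨w, hw⟩ := pa (x * a⁻¹)
    have hpa : pr a = 1 := by
      have : a ∈ pr.ker := hTker ▸ ha
      exact this
    refine ⟨(w.copy rfl (by group)).reverse, ?_⟩
    intro z hz
    rw [SimpleGraph.Walk.support_reverse, List.mem_reverse,
      SimpleGraph.Walk.support_copy] at hz
    have := hw z hz
    rwa [map_mul, map_inv, hpa, inv_one, mul_one] at this

end Quotient

/-- Corollary: cutconnectivity along group quotients.
Let `G` and `H` be finitely generated groups with `G` one-ended and `H`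
Noetherian, let `π : H → G` be a surjective homomorphism and `S` a finite
generating set of `H`.  Then `C*_E(Cay(G,π(S))) ≤ C_E(Cay(H,S))`. -/
theorem edgeCutConnStar_cayley_quotient
    (G H : Type) [Group G] [Group H]
    (hGone : GroupOneEnded G)
    (hNoeth : ∀ K : Subgroup H, K.FG)
    (pr : H →* G) (hsurj : Function.Surjective pr)
    (S : Set H) (hSfin : S.Finite) (hSgen : Subgroup.closure S = ⊤) :
    ∀ k : ℕ, 1 ≤ k → edgeCutConnLe (cayley H S) k →
      edgeCutConnStarLe (cayley G (pr '' S)) k := by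
  intro k hk hHle u v A hAfin hAmin
  classical
  have hSGgen : Subgroup.closure (pr '' S) = ⊤ := by
    rw [← MonoidHom.map_closure, hSgen, Subgroup.map_top_of_surjective _ hsurj]
  have hconnH : (cayley H S).Connected := cayley_connected hSgen
  have hconnG : (cayley G (pr '' S)).Connected := cayley_connected hSGgen
  have hGinf : Infinite G := by
    obtain ⟨o, -, hinf, -⟩ := hGone (pr '' S) (hSfin.image _) hSGgen ∅ Set.finite_empty
    exact Set.infinite_univ_iff.mp (hinf.mono (Set.subset_univ _))
  obtain ⟨Tset, hTclos, hTfin⟩ := (Subgroup.fg_iff pr.ker).mp (hNoeth pr.ker)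
  set T : Finset H := hTfin.toFinset with hT
  have hTclos' : Subgroup.closure (↑T : Set H) = pr.ker := by
    rw [hT, Set.Finite.coe_toFinset]; exact hTclos
  set L : ℕ := T.sup (fun t => (cayley H S).dist 1 t) with hLdef
  have hL : ∀ t ∈ T, (cayley H S).dist 1 t ≤ L := fun t ht => Finset.le_sup ht
  have hFfin : {g : G | ∃ a ∈ A, ∃ q ∈ a, (cayley G (pr '' S)).dist g q ≤ L}.Finite := by
    have hballs : ∀ q : G, {g : G | (cayley G (pr '' S)).dist g q ≤ L}.Finite := by
      intro q
      refine (ball_finite hconnG (cayley_locallyFinite (hSfin.image _)) q L).subset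
        fun g hg => ?_
      simpa [SimpleGraph.dist_comm] using hg
    refine Set.Finite.subset
      (hAfin.biUnion (fun a _ => ((sym2_mem_finite a).biUnion (fun q _ => hballs q)))) ?_
    rintro g ⟨a, ha, q, hq, hd⟩
    exact Set.mem_biUnion ha (Set.mem_biUnion hq hd)
  have KEY : ∀ u' v' : G, IsMinBondCutset (cayley G (pr '' S)) A u' v' →
      ∀ z : G, AvoidReach (cayley G (pr '' S)) A v' z →
      z ∉ {g : G | ∃ a ∈ A, ∃ q ∈ a, (cayley G (pr '' S)).dist g q ≤ L} →
      edgeKConnectedSet (cayley G (pr '' S)) k A := by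
    intro u' v' hAmin' z hreach hz
    have hminz : IsMinBondCutset (cayley G (pr '' S)) A u' z :=
      minBondCutset_shift hAmin' hreach
    obtain ⟨u₀, hu₀⟩ := hsurj u'
    obtain ⟨z₀, hz₀⟩ := hsurj z
    have hBcut : IsBondCutset (cayley H S)
        {e : Sym2 H | e ∈ (cayley H S).edgeSet ∧ Sym2.map pr e ∈ A} u₀ z₀ := by
      refine ⟨fun e he => he.1, fun w => ?_⟩
      obtain ⟨w', -, hw'⟩ := proj_walk pr S w
      obtain ⟨e', he', he'A⟩ := hminz.1.2 (w'.copy hu₀ hz₀)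
      rw [SimpleGraph.Walk.edges_copy] at he'
      obtain ⟨e₀, he₀, hmap⟩ := hw' e' he'
      exact ⟨e₀, he₀, w.edges_subset_edgeSet he₀, by rw [hmap]; exact he'A⟩
    obtain ⟨C, hCB, hCmin⟩ := exists_min_bondCutset hBcut
    have hCk := hHle u₀ z₀ C hCmin
    have hA'sub : Sym2.map pr '' C ⊆ A := by
      rintro e' ⟨e, heC, rfl⟩
      exact (hCB heC).2
    have hA'cut : IsBondCutset (cayley G (pr '' S)) (Sym2.map pr '' C) u' z := by
      refine ⟨hA'sub.trans hminz.1.1, fun w => ?_⟩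
      obtain ⟨v₁, wlift, hv₁, hwlift⟩ := lift_walk pr S w u₀ hu₀
      by_cases hc : ∃ e ∈ wlift.edges, e ∈ C
      · obtain ⟨e, he, heC⟩ := hc
        exact ⟨Sym2.map pr e, hwlift e he, e, heC, rfl⟩
      · exfalso
        push_neg at hc
        have hker : v₁⁻¹ * z₀ ∈ Subgroup.closure (↑T : Set H) := by
          rw [hTclos', MonoidHom.mem_ker, map_mul, map_inv, hv₁, hz₀, inv_mul_cancel]
        obtain ⟨P, hP⟩ := ker_walk pr S hTclos' hconnH hconnG hL _ hker v₁
        have hPend : v₁ * (v₁⁻¹ * z₀) = z₀ := by group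
        have hPavoid : ∀ e ∈ P.edges, e ∉ C := by
          intro e he heC
          have heB := hCB heC
          induction e using Sym2.ind with
          | _ p q =>
            have hp : p ∈ P.support := SimpleGraph.Walk.fst_mem_support_of_mem_edges P he
            have hdist := hP p hp
            rw [hv₁] at hdist
            refine hz ⟨Sym2.map pr s(p, q), heB.2, pr p, ?_, hdist⟩
            rw [Sym2.map_pair_eq]
            exact Sym2.mem_mk_left _ _
        obtain ⟨e, he, heC⟩ := hCmin.1.2 (wlift.append (P.copy rfl hPend))
        rw [SimpleGraph.Walk.edges_append, List.mem_append,
          SimpleGraph.Walk.edges_copy] at he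
        rcases he with he | he
        · exact hc e he heC
        · exact hPavoid e he heC
    have hA'eq : Sym2.map pr '' C = A := by
      by_contra hne
      exact hminz.2 _ (Set.ssubset_iff_subset_ne.mpr ⟨hA'sub, hne⟩) hA'cut
    intro e he f hf
    rw [← hA'eq] at he hf
    obtain ⟨e₀, he₀C, rfl⟩ := he
    obtain ⟨f₀, hf₀C, rfl⟩ := hf
    refine reflTransGen_map_of (Sym2.map pr) ?_ (hCk e₀ he₀C f₀ hf₀C)
    rintro a b ⟨haC, hbC, hne, x, hx, y, hy, hd⟩
    by_cases hab : Sym2.map pr a = Sym2.map pr b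
    · rw [hab]
    · refine Relation.ReflTransGen.single ⟨hA'eq ▸ Set.mem_image_of_mem _ haC,
        hA'eq ▸ Set.mem_image_of_mem _ hbC, hab, pr x, Sym2.mem_map.mpr ⟨x, hx, rfl⟩,
        pr y, Sym2.mem_map.mpr ⟨y, hy, rfl⟩, ?_⟩
      exact le_trans (dist_pr_le pr S hconnH x y) hd
  obtain ⟨z, hz⟩ := hFfin.infinite_compl.nonempty
  rcases comps_cover hconnG hAmin z with h | h
  · exact KEY v u (minBondCutset_symm hAmin) z h hz
  · exact KEY u v hAmin z h hz

end PercPaper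
end

section
/- Let G be a graph in 𝔊 with a fixed vertex o, let N ≥ 1, and let ω be a percolation configuration on G such that 20N < diam(C_o) < ∞. Then every vertex of ∂C_o(N) is N-bad in ω. -/
open MeasureTheory Set
open scoped ENNReal

namespace PercPaper

lemma conn_symm (Γ : SpaceGraph) (ω : Sym2 Γ.V → Bool) {u v : Γ.V}
    (h : Conn Γ ω u v) : Conn Γ ω v u := by
  refine (@Relation.ReflTransGen.symmetric _ _ ⟨?_⟩).symm _ _ h
  intro a b hab
  exact ⟨hab.1.symm, by rw [Sym2.eq_swap]; exact hab.2⟩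

lemma connIn_conn (Γ : SpaceGraph) (ω : Sym2 Γ.V → Bool) {S : Set Γ.V} {u v : Γ.V}
    (h : ConnIn Γ ω S u v) : Conn Γ ω u v :=
  Relation.ReflTransGen.mono (r := fun a b => a ∈ S ∧ b ∈ S ∧ openAdj Γ ω a b) (p := openAdj Γ ω)
    (by intro a b hab; exact hab.2.2) u v h

/-- Crossing lemma: an open path from inside `B(w,n)` to outside must first hit
`S(w,n)` while staying in `B(w,n)`. -/
lemma crossing (Γ : SpaceGraph) (ω : Sym2 Γ.V → Bool) (w : Γ.V) (n : ℕ)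
    {a b : Γ.V} (h : Conn Γ ω a b) (ha : Γ.G.dist w a ≤ n) (hb : n ≤ Γ.G.dist w b) :
    ∃ c, Γ.G.dist w c = n ∧ ConnIn Γ ω (ball Γ w n) a c := by
  induction h using Relation.ReflTransGen.head_induction_on with
  | refl => exact ⟨b, le_antisymm ha hb, Relation.ReflTransGen.refl⟩
  | head hstep htail ih =>
    rename_i p q
    rcases eq_or_lt_of_le ha with heq | hlt
    · exact ⟨p, heq, Relation.ReflTransGen.refl⟩
    · have hq : Γ.G.dist w q ≤ n := by
        have ht := Γ.connected.dist_triangle (u := w) (v := p) (w := q)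
        have h1 : Γ.G.dist p q = 1 := SimpleGraph.dist_eq_one_iff_adj.mpr hstep.1
        omega
      obtain ⟨c, hc, hcc⟩ := ih hq
      exact ⟨c, hc, Relation.ReflTransGen.head ⟨le_of_lt hlt, hq, hstep⟩ hcc⟩

/-- Proposition: boundary vertices are bad.
Let `G ∈ 𝔊` with root `o`, `N ≥ 1`, and let `ω` be a configuration with
`20N < diam(C_o) < ∞`.  Then every vertex of `∂C_o(N)` is `N`-bad in `ω`. -/
theorem exposedBoundary_bad
    (Γ : SpaceGraph) (hΓ : InPolyClass Γ) (o : Γ.V) (N : ℕ) (hN : 1 ≤ N)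
    (ω : Sym2 Γ.V → Bool)
    (hfin : (cluster Γ ω o).Finite)
    (hdiam : ∃ x ∈ cluster Γ ω o, ∃ y ∈ cluster Γ ω o, 20 * N < Γ.G.dist x y) :
    ∀ x ∈ exposedBoundary Γ (clusterNbhd Γ ω o N), NBad Γ ω N x := by
  rintro x ⟨hx, w, hw, hxw, -⟩
  intro hgood
  obtain ⟨⟨a, ha, b, hb, hconn⟩, hU⟩ := hgood w (Or.inr hxw)
  obtain ⟨u, hu, hxu⟩ := hx
  -- distance estimates
  have hwx : Γ.G.dist w x = 1 := SimpleGraph.dist_eq_one_iff_adj.mpr hxw.symm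
  have hwu : Γ.G.dist w u ≤ N + 1 := by
    have ht := Γ.connected.dist_triangle (u := w) (v := x) (w := u)
    omega
  -- find a cluster vertex far from u
  obtain ⟨x', hx', y', hy', hd⟩ := hdiam
  have hfar : ∃ v ∈ cluster Γ ω o, 10 * N < Γ.G.dist u v := by
    have ht := Γ.connected.dist_triangle (u := x') (v := u) (w := y')
    have h1 := Γ.G.dist_comm (u := x') (v := u)
    rcases le_or_gt (Γ.G.dist u x') (10 * N) with hle | hlt
    · exact ⟨y', hy', by omega⟩
    · exact ⟨x', hx', hlt⟩
  obtain ⟨v, hv, huv⟩ := hfar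
  have hwv : 5 * N ≤ Γ.G.dist w v := by
    have ht := Γ.connected.dist_triangle (u := u) (v := w) (w := v)
    have h1 := Γ.G.dist_comm (u := u) (v := w)
    omega
  -- open path from u to v crosses S(w,5N)
  have hconnuv : Conn Γ ω u v := (conn_symm Γ ω hu).trans hv
  obtain ⟨c, hc, hcc⟩ := crossing Γ ω w (5 * N) hconnuv (by omega) hwv
  -- open path from a to b crosses S(w,5N)
  have hwa : Γ.G.dist w a ≤ N := ha
  have hwb : Γ.G.dist w b = 10 * N := hb
  obtain ⟨c', hc', hcc'⟩ := crossing Γ ω w (5 * N) hconn (by omega) (by omega)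
  -- uniqueness event
  have huc : ConnIn Γ ω (ball Γ w (5 * N)) u a :=
    hU u c a c' (by simpa [ball] using by omega : u ∈ ball Γ w (2 * N)) hc
      (by simpa [ball] using by omega : a ∈ ball Γ w (2 * N)) hc' hcc hcc'
  have hconnoa : Conn Γ ω o a := hu.trans (connIn_conn Γ ω huc)
  exact hw ⟨a, hconnoa, hwa⟩

end PercPaper
end
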